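/- Let 0 < r < 1 and let m* ∈ (−1, 0) satisfy r(6 + 8m* + 3m*²) = (1 + m*)³(6 + 4m* + m*²). Then for every real s ≠ 0 and every real m̄, if r s³(6m* + 8m*² + 3m*³) = (s(1 + m*))³(6m̄ + 4m̄² + m̄³), then m̄ = m*. Consequently the ray { (s, m* s) : s > 0 } is invariant under the leading-order blown-up swan map (s, m) ↦ (s(1 + m), m̄), on which the s-coordinate is contracted by the factor 1 + m* ∈ (0, 1). -/
import Mathlib


/-- **Invariant ray of the leading-order blown-up swan map.**
Let `0 < r < 1` and let `m* ∈ (−1, 0)` satisfy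
`r(6 + 8m* + 3m*²) = (1 + m*)³(6 + 4m* + m*²)`.  Then for every `s ≠ 0` and every
`m̄`, if `r s³(6m* + 8m*² + 3m*³) = (s(1 + m*))³(6m̄ + 4m̄² + m̄³)` then `m̄ = m*`.
Consequently the ray `{(s, m* s) : s > 0}` is invariant under the leading-order
blown-up swan map `(s, m) ↦ (s(1 + m), m̄)`, on which the `s`-coordinate is
contracted by the factor `1 + m* ∈ (0, 1)`. -/
theorem swan_invariant_ray (r ms : ℝ) (hr0 : 0 < r) (hr1 : r < 1)
    (hms : ms ∈ Set.Ioo (-1 : ℝ) 0)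
    (heq : r * (6 + 8 * ms + 3 * ms ^ 2)
      = (1 + ms) ^ 3 * (6 + 4 * ms + ms ^ 2)) :
    (∀ s : ℝ, s ≠ 0 → ∀ mb : ℝ,
      r * s ^ 3 * (6 * ms + 8 * ms ^ 2 + 3 * ms ^ 3)
          = (s * (1 + ms)) ^ 3 * (6 * mb + 4 * mb ^ 2 + mb ^ 3) →
      mb = ms) ∧
    0 < 1 + ms ∧ 1 + ms < 1 := by
  obtain ⟨hm1, hm0⟩ := hms
  refine ⟨?_, by linarith, by linarith⟩
  intro s hs mb h
  have h1 : (0:ℝ) < 1 + ms := by linarith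
  have hs3 : s ^ 3 ≠ 0 := pow_ne_zero _ hs
  have h13 : (1 + ms) ^ 3 ≠ 0 := pow_ne_zero _ (by linarith)
  -- reduce to equality of the cubic values
  have hcub : 6 * mb + 4 * mb ^ 2 + mb ^ 3 = 6 * ms + 4 * ms ^ 2 + ms ^ 3 := by
    have key : s ^ 3 * (1 + ms) ^ 3 * (6 * mb + 4 * mb ^ 2 + mb ^ 3)
        = s ^ 3 * (1 + ms) ^ 3 * (6 * ms + 4 * ms ^ 2 + ms ^ 3) := by
      linear_combination (-1) * h + s ^ 3 * ms * heq
    have hne : s ^ 3 * (1 + ms) ^ 3 ≠ 0 := mul_ne_zero hs3 h13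
    exact mul_left_cancel₀ hne key
  -- the cubic x ↦ 6x + 4x² + x³ is injective
  nlinarith [hcub, sq_nonneg (2 * mb + ms + 4), sq_nonneg (3 * ms + 4), sq_nonneg (mb - ms), sq_nonneg (mb + ms)]
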